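/- arXiv:2206.15292 — 4 statements merged into one kernel-verified Lean document; each statement's English description precedes it below -/
import Mathlib

section
/- Let P and Q be orthogonal projections on a (finite-dimensional complex inner product) Hilbert space H, and let s be the largest singular value of PQ that is strictly less than 1 (set s = 0 if all singular values of PQ equal 1). Then for every vector ψ in H, ‖P(1−Q)ψ‖ ≤ ‖Pψ‖ + s·‖Qψ‖. -/
noncomputable abbrev Op (n : ℕ) :=
  EuclideanSpace ℂ (Fin n) →L[ℂ] EuclideanSpace ℂ (Fin n)

/-- The set of singular values of `T` that are strictly less than 1. -/
def smallSingularValues {n : ℕ} (T : Op n) : Set ℝ :=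
  {σ : ℝ | 0 ≤ σ ∧ σ < 1 ∧
    ∃ ψ : EuclideanSpace ℂ (Fin n), ψ ≠ 0 ∧
      (T * ContinuousLinearMap.adjoint T) ψ = ((σ : ℂ) ^ 2) • ψ}

section Aux

open ContinuousLinearMap

private lemma proj_inner_self {n : ℕ} (P : Op n) (hP : IsSelfAdjoint P) (hP2 : P * P = P)
    (x : EuclideanSpace ℂ (Fin n)) :
    (inner ℂ x (P x) : ℂ) = ((‖P x‖ ^ 2 : ℝ) : ℂ) := by
  have h1 : P (P x) = P x := by
    have h : (P * P) x = P x := by rw [hP2]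
    simpa [ContinuousLinearMap.mul_apply] using h
  have h2 : (inner ℂ x (P (P x)) : ℂ) = inner ℂ (P x) (P x) := (hP.isSymmetric x (P x)).symm
  calc (inner ℂ x (P x) : ℂ) = inner ℂ x (P (P x)) := by rw [h1]
  _ = inner ℂ (P x) (P x) := h2
  _ = ((‖P x‖ ^ 2 : ℝ) : ℂ) := by rw [inner_self_eq_norm_sq_to_K]; norm_cast

private lemma proj_norm_sub_sq {n : ℕ} (P : Op n) (hP : IsSelfAdjoint P) (hP2 : P * P = P)
    (x : EuclideanSpace ℂ (Fin n)) :
    ‖x - P x‖ ^ 2 = ‖x‖ ^ 2 - ‖P x‖ ^ 2 := by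
  have h := @norm_sub_sq ℂ _ _ _ _ x (P x)
  have h2 : RCLike.re (inner ℂ x (P x) : ℂ) = ‖P x‖ ^ 2 := by
    rw [proj_inner_self P hP hP2 x]
    norm_cast
  rw [h, h2]; ring

private lemma proj_norm_le {n : ℕ} (P : Op n) (hP : IsSelfAdjoint P) (hP2 : P * P = P)
    (x : EuclideanSpace ℂ (Fin n)) : ‖P x‖ ≤ ‖x‖ := by
  have h := proj_norm_sub_sq P hP hP2 x
  nlinarith [sq_nonneg ‖x - P x‖, norm_nonneg (P x), norm_nonneg x]

private lemma proj_fix {n : ℕ} (P : Op n) (hP : IsSelfAdjoint P) (hP2 : P * P = P)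
    (x : EuclideanSpace ℂ (Fin n)) (hx : ‖x‖ ≤ ‖P x‖) : P x = x := by
  have h := proj_norm_sub_sq P hP hP2 x
  have h0 : ‖x - P x‖ ^ 2 ≤ 0 := by nlinarith [norm_nonneg (P x), norm_nonneg x]
  have : ‖x - P x‖ = 0 := by nlinarith [sq_nonneg ‖x - P x‖, norm_nonneg (x - P x)]
  have := norm_eq_zero.mp this
  rw [sub_eq_zero] at this
  exact this.symm

private lemma rayleigh_le {n : ℕ} (B : Op n) (hB : IsSelfAdjoint B) (c : ℝ)
    (h : ∀ (μ : ℝ) (v : EuclideanSpace ℂ (Fin n)), v ≠ 0 → B v = (μ : ℂ) • v → μ ≤ c)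
    (hc : 0 ≤ c) (y : EuclideanSpace ℂ (Fin n)) :
    RCLike.re (inner ℂ y (B y) : ℂ) ≤ c * ‖y‖ ^ 2 := by
  have hn : Module.finrank ℂ (EuclideanSpace ℂ (Fin n)) = n :=
    finrank_euclideanSpace_fin
  have hsym : (B : EuclideanSpace ℂ (Fin n) →ₗ[ℂ] EuclideanSpace ℂ (Fin n)).IsSymmetric :=
    hB.isSymmetric
  set b := hsym.eigenvectorBasis hn with hb
  set μ := hsym.eigenvalues hn with hμ
  have hμc : ∀ i, μ i ≤ c := by
    intro i
    refine h (μ i) (b i) (hsym.hasEigenvector_eigenvectorBasis hn i).2 ?_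
    exact hsym.apply_eigenvectorBasis hn i
  have hrep : ∀ i, b.repr (B y) i = (μ i : ℂ) * b.repr y i := fun i =>
    hsym.eigenvectorBasis_apply_self_apply hn y i
  have hinner : (inner ℂ y (B y) : ℂ) = inner ℂ (b.repr y) (b.repr (B y)) :=
    (b.repr.inner_map_map y (B y)).symm
  have hinner2 : (inner ℂ y y : ℂ) = inner ℂ (b.repr y) (b.repr y) :=
    (b.repr.inner_map_map y y).symm
  have hterm : ∀ i, RCLike.re (inner ℂ (b.repr y i) (b.repr (B y) i) : ℂ)
      = μ i * ‖b.repr y i‖ ^ 2 := by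
    intro i
    rw [hrep i, RCLike.inner_apply, RCLike.re_to_complex]
    rw [show (μ i : ℂ) * b.repr y i * (starRingEnd ℂ) (b.repr y i)
        = (μ i : ℂ) * (b.repr y i * (starRingEnd ℂ) (b.repr y i)) by ring]
    rw [Complex.mul_conj, ← Complex.ofReal_mul, Complex.ofReal_re,
      Complex.normSq_eq_norm_sq]
  have hsum : RCLike.re (inner ℂ y (B y) : ℂ) = ∑ i, μ i * ‖b.repr y i‖ ^ 2 := by
    rw [hinner, PiLp.inner_apply, map_sum]
    exact Finset.sum_congr rfl fun i _ => hterm i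
  have hnorm : ‖y‖ ^ 2 = ∑ i, ‖b.repr y i‖ ^ 2 := by
    have h1 : RCLike.re (inner ℂ y y : ℂ) = ‖y‖ ^ 2 := by
      rw [inner_self_eq_norm_sq_to_K]; norm_cast
    rw [← h1, hinner2, PiLp.inner_apply, map_sum]
    refine Finset.sum_congr rfl fun i _ => ?_
    rw [RCLike.inner_apply, RCLike.re_to_complex, Complex.mul_conj,
      Complex.ofReal_re, Complex.normSq_eq_norm_sq]
  rw [hsum, hnorm, Finset.mul_sum]
  refine Finset.sum_le_sum fun i _ => ?_
  exact mul_le_mul_of_nonneg_right (hμc i) (sq_nonneg _)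

end Aux

set_option maxHeartbeats 1000000 in
theorem stmt_0 {n : ℕ} (P Q : Op n)
    (hP : IsSelfAdjoint P) (hP2 : P * P = P)
    (hQ : IsSelfAdjoint Q) (hQ2 : Q * Q = Q)
    (s : ℝ) (hs : s = sSup (insert 0 (smallSingularValues (P * Q)))) :
    ∀ ψ : EuclideanSpace ℂ (Fin n),
      ‖(P * (1 - Q)) ψ‖ ≤ ‖P ψ‖ + s * ‖Q ψ‖ := by
  classical
  intro ψ
  have hbound : ∀ x ∈ insert (0:ℝ) (smallSingularValues (P * Q)), x ≤ 1 := by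
    rintro x (rfl | hx)
    · exact zero_le_one
    · exact hx.2.1.le
  have hbdd : BddAbove (insert (0:ℝ) (smallSingularValues (P * Q))) := ⟨1, hbound⟩
  have hs0 : 0 ≤ s := hs ▸ le_csSup hbdd (Set.mem_insert 0 _)
  -- The eigenspace V = ker (PQP - 1)
  set V : Submodule ℂ (EuclideanSpace ℂ (Fin n)) :=
    LinearMap.ker ((P * Q * P - 1 : Op n) : EuclideanSpace ℂ (Fin n) →ₗ[ℂ] EuclideanSpace ℂ (Fin n))
    with hVdef
  have hVmem : ∀ x, x ∈ V ↔ (P * Q * P) x = x := by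
    intro x
    simp [hVdef, LinearMap.mem_ker, sub_eq_zero, ContinuousLinearMap.coe_sub,
      ContinuousLinearMap.sub_apply]
  have hfix : ∀ x ∈ V, P x = x ∧ Q x = x := by
    intro x hx
    have hx' : P (Q (P x)) = x := by
      have := (hVmem x).mp hx
      simpa [ContinuousLinearMap.mul_apply] using this
    have h1 : ‖x‖ ≤ ‖P x‖ :=
      calc ‖x‖ = ‖P (Q (P x))‖ := by rw [hx']
      _ ≤ ‖Q (P x)‖ := proj_norm_le P hP hP2 _
      _ ≤ ‖P x‖ := proj_norm_le Q hQ hQ2 _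
    have hPx : P x = x := proj_fix P hP hP2 x h1
    rw [hPx] at hx'
    have h2 : ‖x‖ ≤ ‖Q x‖ :=
      calc ‖x‖ = ‖P (Q x)‖ := by rw [hx']
      _ ≤ ‖Q x‖ := proj_norm_le P hP hP2 _
    exact ⟨hPx, proj_fix Q hQ hQ2 x h2⟩
  -- The projection E onto V
  set E : Op n := V.subtypeL ∘L V.orthogonalProjectionOnto with hEdef
  have hE_sa : IsSelfAdjoint E := isSelfAdjoint_starProjection V
  have hEapp : ∀ x, E x = (V.orthogonalProjectionOnto x : EuclideanSpace ℂ (Fin n)) := fun x => rfl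
  have hEmem : ∀ x, E x ∈ V := fun x => by rw [hEapp]; exact (V.orthogonalProjectionOnto x).2
  have hEfix : ∀ x ∈ V, E x = x := by
    intro x hx
    rw [hEapp]
    exact V.starProjection_eq_self_iff.mpr hx
  have hPE : P * E = E := by
    refine ContinuousLinearMap.ext fun x => ?_
    simp only [ContinuousLinearMap.mul_apply]
    exact (hfix (E x) (hEmem x)).1
  have hQE : Q * E = E := by
    refine ContinuousLinearMap.ext fun x => ?_
    simp only [ContinuousLinearMap.mul_apply]
    exact (hfix (E x) (hEmem x)).2
  have hEE : E * E = E := by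
    refine ContinuousLinearMap.ext fun x => ?_
    simp only [ContinuousLinearMap.mul_apply]
    exact hEfix (E x) (hEmem x)
  have hEP : E * P = E := by
    have h := congrArg star hPE
    rwa [star_mul, hE_sa.star_eq, hP.star_eq] at h
  have hEQ : E * Q = E := by
    have h := congrArg star hQE
    rwa [star_mul, hE_sa.star_eq, hQ.star_eq] at h
  -- operator identities
  have hPme_sa : IsSelfAdjoint (P - E) := by
    rw [ContinuousLinearMap.isSelfAdjoint_iff', map_sub, hP.adjoint_eq, hE_sa.adjoint_eq]
  have hPme2 : (P - E) * (P - E) = P - E := by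
    rw [mul_sub, sub_mul, sub_mul, hP2, hPE, hEP, hEE]; abel
  have hPmeP : (P - E) * P = P - E := by rw [sub_mul, hP2, hEP]
  have hTQ : (P * Q - E) * Q = P * Q - E := by rw [sub_mul, mul_assoc, hQ2, hEQ]
  have hadjT : ContinuousLinearMap.adjoint (P * Q - E) = Q * P - E := by
    rw [map_sub, hE_sa.adjoint_eq, ← ContinuousLinearMap.star_eq_adjoint, star_mul,
      hP.star_eq, hQ.star_eq]
  have hQPPQ : (Q * P) * (P * Q) = Q * (P * Q) := by
    rw [mul_assoc Q P (P * Q), ← mul_assoc P P Q, hP2]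
  have hB : (Q * P - E) * (P * Q - E) = Q * (P * Q) - E := by
    rw [sub_mul, mul_sub, mul_sub, hQPPQ, hEE]
    rw [mul_assoc Q P E, hPE, hQE]
    rw [← mul_assoc E P Q, hEP, hEQ]
    abel
  have hB_sa : IsSelfAdjoint (Q * (P * Q) - E) := by
    rw [ContinuousLinearMap.isSelfAdjoint_iff', map_sub, hE_sa.adjoint_eq,
      ← ContinuousLinearMap.star_eq_adjoint, star_mul, star_mul, hP.star_eq, hQ.star_eq,
      mul_assoc]
  have hEB : E * (Q * (P * Q) - E) = 0 := by
    rw [mul_sub, ← mul_assoc, hEQ, ← mul_assoc, hEP, hEQ, hEE, sub_self]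
  -- eigenvalue bound
  have heig : ∀ (μ : ℝ) (v : EuclideanSpace ℂ (Fin n)), v ≠ 0 →
      (Q * (P * Q) - E) v = (μ : ℂ) • v → μ ≤ s ^ 2 := by
    intro μ v hv0 hv
    rcases le_or_gt μ 0 with hle | hpos
    · exact hle.trans (sq_nonneg s)
    · have hEv : E v = 0 := by
        have h0 : E ((Q * (P * Q) - E) v) = 0 := by
          have : (E * (Q * (P * Q) - E)) v = (0 : Op n) v := by rw [hEB]
          simpa [ContinuousLinearMap.mul_apply] using this
        rw [hv, map_smul] at h0
        rcases smul_eq_zero.mp h0 with h | h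
        · exact absurd (by exact_mod_cast h) (ne_of_gt hpos)
        · exact h
      have hQPQ : Q (P (Q v)) = (μ : ℂ) • v := by
        have := hv
        rw [ContinuousLinearMap.sub_apply, hEv, sub_zero] at this
        simpa [ContinuousLinearMap.mul_apply] using this
      have hvpos : 0 < ‖v‖ := norm_pos_iff.mpr hv0
      have hchain : ‖Q (P (Q v))‖ ≤ ‖v‖ :=
        ((proj_norm_le Q hQ hQ2 _).trans (proj_norm_le P hP hP2 _)).trans
          (proj_norm_le Q hQ hQ2 _)
      have hnormsmul : ‖Q (P (Q v))‖ = μ * ‖v‖ := by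
        rw [hQPQ, norm_smul, Complex.norm_real, Real.norm_eq_abs, abs_of_pos hpos]
      have hμle : μ ≤ 1 := by
        rw [hnormsmul] at hchain
        nlinarith
      have hμlt : μ < 1 := by
        rcases lt_or_eq_of_le hμle with h | h
        · exact h
        · exfalso
          rw [h] at hQPQ
          simp only [Complex.ofReal_one, one_smul] at hQPQ
          have hQv : Q v = v := by
            refine proj_fix Q hQ hQ2 v ?_
            calc ‖v‖ = ‖Q (P (Q v))‖ := by rw [hQPQ]
            _ ≤ ‖P (Q v)‖ := proj_norm_le Q hQ hQ2 _
            _ ≤ ‖Q v‖ := proj_norm_le P hP hP2 _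
          rw [hQv] at hQPQ
          have hPv : P v = v := by
            refine proj_fix P hP hP2 v ?_
            calc ‖v‖ = ‖Q (P v)‖ := by rw [hQPQ]
            _ ≤ ‖P v‖ := proj_norm_le Q hQ hQ2 _
          have hvV : v ∈ V := by
            rw [hVmem]
            simp [ContinuousLinearMap.mul_apply, hPv, hQv]
          have := hEfix v hvV
          rw [hEv] at this
          exact hv0 this.symm
      set σ := Real.sqrt μ with hσ
      have hσ2 : σ ^ 2 = μ := Real.sq_sqrt hpos.le
      have hσmem : σ ∈ smallSingularValues (P * Q) := by
        refine ⟨Real.sqrt_nonneg _, ?_, (P * Q) v, ?_, ?_⟩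
        · calc σ < Real.sqrt 1 := Real.sqrt_lt_sqrt hpos.le hμlt
          _ = 1 := Real.sqrt_one
        · intro h0
          apply hv0
          have : Q ((P * Q) v) = (μ : ℂ) • v := by
            simpa [ContinuousLinearMap.mul_apply] using hQPQ
          rw [h0, map_zero] at this
          rcases smul_eq_zero.mp this.symm with h | h
          · exact absurd (by exact_mod_cast h) (ne_of_gt hpos)
          · exact h
        · have hadjA : ContinuousLinearMap.adjoint (P * Q) = Q * P := by
            rw [← ContinuousLinearMap.star_eq_adjoint, star_mul, hP.star_eq, hQ.star_eq]
          rw [hadjA]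
          have hop : (P * Q) * (Q * P) * (P * Q) = (P * Q) * (Q * (P * Q)) := by
            rw [mul_assoc, hQPPQ]
          have : ((P * Q) * (Q * P)) ((P * Q) v) = ((P * Q) * (Q * P) * (P * Q)) v := by
            simp [ContinuousLinearMap.mul_apply]
          rw [this, hop]
          have hQPQv : (Q * (P * Q)) v = (μ : ℂ) • v := by
            simpa [ContinuousLinearMap.mul_apply] using hQPQ
          rw [ContinuousLinearMap.mul_apply, hQPQv, map_smul]
          congr 1
          rw [← hσ2]
          push_cast
          ring
      have hσle : σ ≤ s := hs ▸ le_csSup hbdd (Set.mem_insert_of_mem _ hσmem)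
      calc μ = σ ^ 2 := hσ2.symm
      _ ≤ s ^ 2 := by nlinarith [Real.sqrt_nonneg μ]
  -- the norm bound for P*Q - E
  have key2 : ∀ y, ‖(P * Q - E) y‖ ≤ s * ‖y‖ := by
    intro y
    have h1 : (‖(P * Q - E) y‖ : ℝ) ^ 2 = RCLike.re (inner ℂ y ((Q * (P * Q) - E) y) : ℂ) := by
      rw [← hB]
      have h2 : (inner ℂ y (((Q * P - E) * (P * Q - E)) y) : ℂ)
          = inner ℂ ((P * Q - E) y) ((P * Q - E) y) := by
        rw [ContinuousLinearMap.mul_apply, ← hadjT]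
        exact ContinuousLinearMap.adjoint_inner_right _ _ _
      rw [h2, inner_self_eq_norm_sq_to_K, ← RCLike.ofReal_pow, RCLike.ofReal_re]
    have h3 := rayleigh_le (Q * (P * Q) - E) hB_sa (s ^ 2) heig (sq_nonneg s) y
    rw [← h1] at h3
    nlinarith [norm_nonneg ((P * Q - E) y), norm_nonneg y, mul_nonneg hs0 (norm_nonneg y)]
  -- assemble
  have hsplit : (P * (1 - Q)) ψ = (P - E) ψ - (P * Q - E) ψ := by
    have hop : P * (1 - Q) = (P - E) - (P * Q - E) := by
      rw [mul_sub, mul_one]; abel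
    rw [hop, ContinuousLinearMap.sub_apply]
  have ha : ‖(P - E) ψ‖ ≤ ‖P ψ‖ := by
    have : (P - E) ψ = (P - E) (P ψ) := by
      conv_lhs => rw [← hPmeP]
      simp [ContinuousLinearMap.mul_apply]
    rw [this]
    exact proj_norm_le (P - E) hPme_sa hPme2 _
  have hb : ‖(P * Q - E) ψ‖ ≤ s * ‖Q ψ‖ := by
    have : (P * Q - E) ψ = (P * Q - E) (Q ψ) := by
      conv_lhs => rw [← hTQ]
      simp [ContinuousLinearMap.mul_apply]
    rw [this]
    exact key2 _
  calc ‖(P * (1 - Q)) ψ‖ = ‖(P - E) ψ - (P * Q - E) ψ‖ := by rw [hsplit]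
  _ ≤ ‖(P - E) ψ‖ + ‖(P * Q - E) ψ‖ := norm_sub_le _ _
  _ ≤ ‖P ψ‖ + s * ‖Q ψ‖ := add_le_add ha hb
end

section
/- Let P₁, …, P_m be orthogonal projections on a finite-dimensional complex Hilbert space and set O = (1/m)·∑_{j=1}^m P_j. Then 1 − ‖O‖ ≥ (1 − ‖P₁P₂⋯P_m‖) / (m·(1 + ‖P₁P₂⋯P_m‖)), where ‖·‖ denotes the operator norm. -/
section Aux

variable {E : Type*} [NormedAddCommGroup E] [InnerProductSpace ℂ E] [CompleteSpace E]

local notation "⟪" x ", " y "⟫" => @inner ℂ _ _ x y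

lemma sa_inner_left {P : E →L[ℂ] E} (hP : IsSelfAdjoint P) (v w : E) :
    ⟪P v, w⟫ = ⟪v, P w⟫ := by
  conv_lhs => rw [← hP.adjoint_eq]
  exact ContinuousLinearMap.adjoint_inner_left P w v

lemma proj_re_inner {P : E →L[ℂ] E} (hP : IsSelfAdjoint P) (hP2 : P * P = P) (v : E) :
    ‖P v‖ ^ 2 = RCLike.re ⟪v, P v⟫ := by
  have h1 : P (P v) = P v := by
    rw [← ContinuousLinearMap.mul_apply, hP2]
  have h2 : ⟪P v, P v⟫ = ⟪v, P v⟫ := by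
    rw [sa_inner_left hP, h1]
  rw [← inner_self_eq_norm_sq (𝕜 := ℂ), h2]

lemma proj_contraction {P : E →L[ℂ] E} (hP : IsSelfAdjoint P) (hP2 : P * P = P) (v : E) :
    ‖P v‖ ≤ ‖v‖ := by
  rcases eq_or_lt_of_le (norm_nonneg (P v)) with h | h
  · rw [← h]; exact norm_nonneg v
  · have h1 := proj_re_inner hP hP2 v
    have h2 : RCLike.re ⟪v, P v⟫ ≤ ‖v‖ * ‖P v‖ :=
      (RCLike.re_le_norm _).trans (norm_inner_le_norm v (P v))
    nlinarith

lemma one_sub_proj {P : E →L[ℂ] E} (hP : IsSelfAdjoint P) (hP2 : P * P = P) :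
    IsSelfAdjoint (1 - P) ∧ (1 - P) * (1 - P) = 1 - P := by
  refine ⟨(IsSelfAdjoint.one _).sub hP, ?_⟩
  rw [sub_mul, mul_sub, mul_sub, mul_one, one_mul, hP2]
  abel

lemma one_sub_proj_norm_sq {P : E →L[ℂ] E} (hP : IsSelfAdjoint P) (hP2 : P * P = P) (v : E) :
    ‖(1 - P) v‖ ^ 2 = ‖v‖ ^ 2 - RCLike.re ⟪v, P v⟫ := by
  obtain ⟨hR, hR2⟩ := one_sub_proj hP hP2
  rw [proj_re_inner hR hR2 v]
  have : (1 - P) v = v - P v := by simp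
  rw [this, inner_sub_right, map_sub, inner_self_eq_norm_sq (𝕜 := ℂ)]

lemma listprod_contraction (L : List (E →L[ℂ] E))
    (hL : ∀ Q ∈ L, IsSelfAdjoint Q ∧ Q * Q = Q) (ψ : E) :
    ‖L.prod ψ‖ ≤ ‖ψ‖ := by
  induction L with
  | nil => simp
  | cons Q L ih =>
    have hQ := hL Q (List.mem_cons_self ..)
    have h1 : (Q :: L).prod ψ = Q (L.prod ψ) := by
      rw [List.prod_cons, ContinuousLinearMap.mul_apply]
    rw [h1]
    exact (proj_contraction hQ.1 hQ.2 _).trans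
      (ih fun R hR => hL R (List.mem_cons_of_mem _ hR))

/-- The quantum union bound, list form. -/
lemma union_bound (L : List (E →L[ℂ] E))
    (hL : ∀ Q ∈ L, IsSelfAdjoint Q ∧ Q * Q = Q) (ψ : E) :
    ‖ψ‖ ^ 2 - RCLike.re ⟪ψ, L.prod ψ⟫ ≤
      Real.sqrt ((L.map fun Q => ‖ψ‖ ^ 2 - RCLike.re ⟪ψ, Q ψ⟫).sum) *
      Real.sqrt (‖ψ‖ ^ 2 - ‖L.prod ψ‖ ^ 2) := by
  induction L with
  | nil =>
    rw [List.prod_nil]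
    simp only [List.map_nil, List.sum_nil, ContinuousLinearMap.one_apply]
    rw [inner_self_eq_norm_sq (𝕜 := ℂ)]
    simp
  | cons Q L ih =>
    have hQ := hL Q (List.mem_cons_self ..)
    have hL' : ∀ R ∈ L, IsSelfAdjoint R ∧ R * R = R :=
      fun R hR => hL R (List.mem_cons_of_mem _ hR)
    obtain ⟨hRsa, hR2⟩ := one_sub_proj hQ.1 hQ.2
    set v := L.prod ψ with hv
    have hprod : (Q :: L).prod ψ = Q v := by
      rw [List.prod_cons, ContinuousLinearMap.mul_apply]
    set y' : ℝ := (L.map fun R => ‖ψ‖ ^ 2 - RCLike.re ⟪ψ, R ψ⟫).sum with hy'def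
    set q : ℝ := ‖ψ‖ ^ 2 - RCLike.re ⟪ψ, Q ψ⟫ with hqdef
    set s' : ℝ := ‖ψ‖ ^ 2 - ‖v‖ ^ 2 with hs'def
    set d2 : ℝ := ‖v‖ ^ 2 - ‖Q v‖ ^ 2 with hd2def
    have hq : q = ‖(1 - Q) ψ‖ ^ 2 := (one_sub_proj_norm_sq hQ.1 hQ.2 ψ).symm
    have hd2 : d2 = ‖(1 - Q) v‖ ^ 2 := by
      rw [hd2def, one_sub_proj_norm_sq hQ.1 hQ.2 v, proj_re_inner hQ.1 hQ.2 v]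
    have hq0 : 0 ≤ q := by rw [hq]; positivity
    have hd20 : 0 ≤ d2 := by rw [hd2]; positivity
    have hs'0 : 0 ≤ s' := by
      have := listprod_contraction L hL' ψ
      have : ‖v‖ ^ 2 ≤ ‖ψ‖ ^ 2 := by
        nlinarith [norm_nonneg v, norm_nonneg ψ]
      simp only [hs'def]; linarith
    have hy'0 : 0 ≤ y' := by
      rw [hy'def]
      apply List.sum_nonneg
      intro x hx
      rw [List.mem_map] at hx
      obtain ⟨R, hR, rfl⟩ := hx
      obtain ⟨h1, h2⟩ := hL' R hR
      rw [← one_sub_proj_norm_sq h1 h2 ψ]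
      positivity
    -- key cross term estimate
    have hcross : RCLike.re ⟪ψ, v⟫ - RCLike.re ⟪ψ, Q v⟫ ≤
        Real.sqrt q * Real.sqrt d2 := by
      have h0 : ⟪ψ, v⟫ - ⟪ψ, Q v⟫ = ⟪ψ, (1 - Q) v⟫ := by
        rw [← inner_sub_right]
        simp [inner_sub_right]
      have hidem : ∀ u : E, (1 - Q) ((1 - Q) u) = (1 - Q) u := by
        intro u
        rw [← ContinuousLinearMap.mul_apply, hR2]
      have h1 : ⟪ψ, (1 - Q) v⟫ = ⟪(1 - Q) ψ, (1 - Q) v⟫ := by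
        rw [sa_inner_left hRsa, hidem v]
      have h2 : RCLike.re ⟪(1 - Q) ψ, (1 - Q) v⟫ ≤ ‖(1 - Q) ψ‖ * ‖(1 - Q) v‖ :=
        (RCLike.re_le_norm _).trans (norm_inner_le_norm _ _)
      have h3 : RCLike.re ⟪ψ, v⟫ - RCLike.re ⟪ψ, Q v⟫ ≤ ‖(1 - Q) ψ‖ * ‖(1 - Q) v‖ := by
        rw [← map_sub, h0, h1]; exact h2
      have h4 : Real.sqrt q = ‖(1 - Q) ψ‖ := by
        rw [hq, Real.sqrt_sq (norm_nonneg _)]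
      have h5 : Real.sqrt d2 = ‖(1 - Q) v‖ := by
        rw [hd2, Real.sqrt_sq (norm_nonneg _)]
      rw [h4, h5]; exact h3
    have hIH : ‖ψ‖ ^ 2 - RCLike.re ⟪ψ, v⟫ ≤ Real.sqrt y' * Real.sqrt s' := ih hL'
    -- combine
    have hfinal : Real.sqrt y' * Real.sqrt s' + Real.sqrt q * Real.sqrt d2 ≤
        Real.sqrt (y' + q) * Real.sqrt (s' + d2) := by
      have hkey : (Real.sqrt y' * Real.sqrt s' + Real.sqrt q * Real.sqrt d2) ^ 2 ≤
          (y' + q) * (s' + d2) := by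
        nlinarith [Real.sq_sqrt hy'0, Real.sq_sqrt hs'0, Real.sq_sqrt hq0,
          Real.sq_sqrt hd20, sq_nonneg (Real.sqrt y' * Real.sqrt d2 -
            Real.sqrt q * Real.sqrt s'), Real.sqrt_nonneg y', Real.sqrt_nonneg s',
          Real.sqrt_nonneg q, Real.sqrt_nonneg d2]
      calc Real.sqrt y' * Real.sqrt s' + Real.sqrt q * Real.sqrt d2
          = Real.sqrt ((Real.sqrt y' * Real.sqrt s' + Real.sqrt q * Real.sqrt d2) ^ 2) := by
            rw [Real.sqrt_sq (by positivity)]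
        _ ≤ Real.sqrt ((y' + q) * (s' + d2)) := Real.sqrt_le_sqrt hkey
        _ = Real.sqrt (y' + q) * Real.sqrt (s' + d2) := Real.sqrt_mul (by linarith) _
    have hsum : ((Q :: L).map fun R => ‖ψ‖ ^ 2 - RCLike.re ⟪ψ, R ψ⟫).sum = q + y' := by
      simp [hy'def, hqdef]
    rw [hprod, hsum]
    have h6 : ‖ψ‖ ^ 2 - RCLike.re ⟪ψ, Q v⟫ ≤
        Real.sqrt y' * Real.sqrt s' + Real.sqrt q * Real.sqrt d2 := by linarith
    have h7 : ‖ψ‖ ^ 2 - ‖Q v‖ ^ 2 = s' + d2 := by rw [hs'def, hd2def]; ring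
    rw [h7]
    calc ‖ψ‖ ^ 2 - RCLike.re ⟪ψ, Q v⟫ ≤
        Real.sqrt (y' + q) * Real.sqrt (s' + d2) := le_trans h6 hfinal
      _ = Real.sqrt (q + y') * Real.sqrt (s' + d2) := by rw [add_comm]

end Aux

set_option maxHeartbeats 1000000 in
theorem stmt_1 {n m : ℕ} (hm : 1 ≤ m) (P : Fin m → Op n)
    (hsa : ∀ j, IsSelfAdjoint (P j)) (hproj : ∀ j, P j * P j = P j) :
    1 - ‖(((m : ℂ)⁻¹ • ∑ j, P j : Op n))‖ ≥
      (1 - ‖(List.ofFn P).prod‖) / (m * (1 + ‖(List.ofFn P).prod‖)) := by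
  classical
  set Prd : Op n := (List.ofFn P).prod with hPrd
  set a : ℝ := ‖Prd‖ with ha
  have ha0 : 0 ≤ a := norm_nonneg _
  have hm0 : (0 : ℝ) < m := by exact_mod_cast hm
  have hmC : ((m : ℂ)) ≠ 0 := by exact_mod_cast hm0.ne'
  set O : Op n := (m : ℂ)⁻¹ • ∑ j, P j with hO
  have hLmem : ∀ Q ∈ List.ofFn P, IsSelfAdjoint Q ∧ Q * Q = Q := by
    intro Q hQ
    rw [List.mem_ofFn] at hQ
    obtain ⟨j, rfl⟩ := hQ
    exact ⟨hsa j, hproj j⟩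
  -- inner products with O
  have hOinner : ∀ x : EuclideanSpace ℂ (Fin n), RCLike.re (inner ℂ x (O x) : ℂ) =
      (m : ℝ)⁻¹ * ∑ j, RCLike.re (inner ℂ x (P j x) : ℂ) := by
    intro x
    have h1 : O x = (m : ℂ)⁻¹ • (∑ j, P j x) := by
      rw [hO, ContinuousLinearMap.smul_apply, ContinuousLinearMap.sum_apply]
    rw [h1, inner_smul_right, inner_sum]
    have h2 : ((m : ℂ))⁻¹ = ((m : ℝ)⁻¹ : ℝ) := by push_cast; ring
    rw [h2]
    rw [show ((((m:ℝ)⁻¹ : ℝ)) : ℂ) = RCLike.ofReal ((m:ℝ)⁻¹) from rfl]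
    rw [RCLike.re_ofReal_mul, map_sum]
  have hOsa : IsSelfAdjoint O := by
    have h1 : ContinuousLinearMap.adjoint (∑ j, P j) = ∑ j, P j := by
      rw [map_sum]
      exact Finset.sum_congr rfl fun j _ => (hsa j).adjoint_eq
    rw [hO, ContinuousLinearMap.isSelfAdjoint_iff', map_smulₛₗ, h1]
    congr 1
    simp
  have hOpos : (0 : Op n) ≤ O := by
    rw [ContinuousLinearMap.nonneg_iff_isPositive]
    refine ⟨hOsa.isSymmetric, fun x => ?_⟩
    have h1 : ContinuousLinearMap.reApplyInnerSelf O x = RCLike.re (inner ℂ (O x) x : ℂ) := rfl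
    have h2 : RCLike.re (inner ℂ (O x) x : ℂ) = RCLike.re (inner ℂ x (O x) : ℂ) := by
      rw [← inner_conj_symm]
      simp
      exact inner_re_symm (𝕜 := ℂ) _ _
    rw [h1, h2, hOinner]
    apply mul_nonneg (by positivity)
    apply Finset.sum_nonneg
    intro j _
    rw [← proj_re_inner (hsa j) (hproj j)]
    positivity
  set c : ℝ := 1 - (1 - a) / (m * (1 + a)) with hc
  clear_value c
  have hdenom : (0 : ℝ) < m * (1 + a) := by positivity
  have hO_le : ‖O‖ ≤ c := by
    have hc0 : 0 ≤ c := by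
      rcases le_or_gt 1 a with h1 | h1
      · have : (1 - a) / (m * (1 + a)) ≤ 0 :=
          div_nonpos_of_nonpos_of_nonneg (by linarith) hdenom.le
        rw [hc]; linarith
      · have hm1 : (1:ℝ) ≤ m := by exact_mod_cast hm
        have : (1 - a) / (m * (1 + a)) ≤ 1 := by
          rw [div_le_one hdenom]
          nlinarith [mul_le_mul_of_nonneg_right hm1 (by linarith : (0:ℝ) ≤ 1 + a)]
        rw [hc]; linarith
    -- key bound for unit vectors
    have hkey : ∀ ψ : EuclideanSpace ℂ (Fin n), ‖ψ‖ = 1 →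
        RCLike.re (inner ℂ ψ (O ψ) : ℂ) ≤ c := by
      intro ψ hψ
      set y : ℝ := ∑ j, (1 - RCLike.re (inner ℂ ψ (P j ψ) : ℂ)) with hy
      clear_value y
      have hy0 : 0 ≤ y := by
        rw [hy]
        apply Finset.sum_nonneg
        intro j _
        have h5 := one_sub_proj_norm_sq (hsa j) (hproj j) ψ
        rw [hψ] at h5
        nlinarith [sq_nonneg ‖(1 - P j) ψ‖]
      have h4 : RCLike.re (inner ℂ ψ (O ψ) : ℂ) = 1 - y / m := by
        rw [hOinner ψ]
        have h4a : ∑ j, RCLike.re (inner ℂ ψ (P j ψ) : ℂ) = (m : ℝ) - y := by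
          rw [hy, Finset.sum_sub_distrib]
          simp
        rw [h4a]
        field_simp
      rcases le_or_gt 1 a with hcase | hcase
      · -- trivial case
        have hc1 : 1 ≤ c := by
          have : (1 - a) / (m * (1 + a)) ≤ 0 :=
            div_nonpos_of_nonpos_of_nonneg (by linarith) hdenom.le
          rw [hc]; linarith
        have h6 : y / m ≥ 0 := by positivity
        rw [h4]; linarith [hc1, h6]
      · -- main case via the union bound
        set x : ℝ := ‖Prd ψ‖ with hx
        have hx0 : 0 ≤ x := norm_nonneg _
        have hxa : x ≤ a := by
          calc ‖Prd ψ‖ ≤ ‖Prd‖ * ‖ψ‖ := Prd.le_opNorm ψ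
            _ = a := by rw [hψ, ha, mul_one]
        have hub := union_bound (List.ofFn P) hLmem ψ
        rw [hψ] at hub
        have hmap : ((List.ofFn P).map fun Q =>
            (1:ℝ) ^ 2 - RCLike.re (inner ℂ ψ (Q ψ) : ℂ)).sum = y := by
          rw [List.map_ofFn, List.sum_ofFn, hy]
          simp
        rw [hmap, ← hPrd] at hub
        have hre : RCLike.re (inner ℂ ψ (Prd ψ) : ℂ) ≤ x := by
          refine (RCLike.re_le_norm _).trans ?_
          calc ‖(inner ℂ ψ (Prd ψ) : ℂ)‖ ≤ ‖ψ‖ * ‖Prd ψ‖ := norm_inner_le_norm _ _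
            _ = x := by rw [hψ, one_mul]
        have h1x2 : 0 ≤ 1 - x ^ 2 := by nlinarith
        have hub2 : 1 - x ≤ Real.sqrt y * Real.sqrt (1 - x ^ 2) := by
          have h1 : (1:ℝ) ^ 2 = 1 := one_pow 2
          rw [h1] at hub
          rw [← hx] at hub
          linarith
        have h2 : (1 - x) ^ 2 ≤ y * (1 - x ^ 2) := by
          have hB : 0 ≤ Real.sqrt y * Real.sqrt (1 - x ^ 2) := by positivity
          have h3 : (1 - x) ^ 2 ≤ (Real.sqrt y * Real.sqrt (1 - x ^ 2)) ^ 2 := by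
            apply sq_le_sq' <;> nlinarith
          calc (1 - x) ^ 2 ≤ (Real.sqrt y * Real.sqrt (1 - x ^ 2)) ^ 2 := h3
            _ = y * (1 - x ^ 2) := by
                rw [mul_pow, Real.sq_sqrt hy0, Real.sq_sqrt h1x2]
        have hu : (0 : ℝ) < 1 - x := by linarith
        have h3 : 1 - a ≤ y * (1 + a) := by
          nlinarith [mul_nonneg hy0 (sub_nonneg.2 hxa), h2, hu, hy0]
        rw [h4, hc]
        have h5 : (1 - a) / (1 + a) ≤ y := by
          rw [div_le_iff₀ (by linarith)]
          linarith
        have h6 : (1 - a) / (m * (1 + a)) ≤ y / m := by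
          rw [div_le_div_iff₀ hdenom hm0]
          nlinarith [mul_le_mul_of_nonneg_right h3 hm0.le]
        linarith
    -- conclude via the Loewner order
    rw [CStarAlgebra.norm_le_iff_le_algebraMap O hc0 hOpos]
    rw [ContinuousLinearMap.le_def]
    have hCsa : IsSelfAdjoint (algebraMap ℝ (Op n) c) := by
      show star (algebraMap ℝ (Op n) c) = algebraMap ℝ (Op n) c
      rw [IsScalarTower.algebraMap_apply ℝ ℂ (Op n), ← algebraMap_star_comm,
        Complex.coe_algebraMap, Complex.star_def, Complex.conj_ofReal]
    refine ⟨(hCsa.sub hOsa).isSymmetric, fun x => ?_⟩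
    have hCx : (algebraMap ℝ (Op n) c) x = (c : ℂ) • x := by
      rw [Algebra.algebraMap_eq_smul_one, ContinuousLinearMap.smul_apply,
        ContinuousLinearMap.one_apply]
      rw [Complex.coe_smul]
    have hrec : RCLike.re (inner ℂ ((c : ℂ) • x) x : ℂ) = c * ‖x‖ ^ 2 := by
      rw [inner_smul_left, Complex.conj_ofReal]
      rw [show ((c : ℝ) : ℂ) = RCLike.ofReal c from rfl, RCLike.re_ofReal_mul]
      rw [inner_self_eq_norm_sq (𝕜 := ℂ)]
    have hEq : ContinuousLinearMap.reApplyInnerSelf (algebraMap ℝ (Op n) c - O) x =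
        c * ‖x‖ ^ 2 - RCLike.re (inner ℂ x (O x) : ℂ) := by
      have h1 : ContinuousLinearMap.reApplyInnerSelf (algebraMap ℝ (Op n) c - O) x =
          RCLike.re (inner ℂ ((algebraMap ℝ (Op n) c - O) x) x : ℂ) := rfl
      have h2 : RCLike.re (inner ℂ (O x) x : ℂ) = RCLike.re (inner ℂ x (O x) : ℂ) := by
        rw [← inner_conj_symm]
        simp
        exact inner_re_symm (𝕜 := ℂ) _ _
      rw [h1, ContinuousLinearMap.sub_apply, inner_sub_left, map_sub, hCx, hrec, h2]
    rw [hEq]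
    rcases eq_or_ne x 0 with rfl | hx
    · simp
    · have hxn : (0 : ℝ) < ‖x‖ := norm_pos_iff.2 hx
      set ψ : EuclideanSpace ℂ (Fin n) := ((‖x‖ : ℂ))⁻¹ • x with hψdef
      have hψ1 : ‖ψ‖ = 1 := by
        rw [hψdef, norm_smul]
        simp [norm_inv, hxn.ne']
      have hscale : RCLike.re (inner ℂ x (O x) : ℂ) =
          ‖x‖ ^ 2 * RCLike.re (inner ℂ ψ (O ψ) : ℂ) := by
        have hx_eq : x = (‖x‖ : ℂ) • ψ := by
          rw [hψdef, smul_smul, mul_inv_cancel₀ (by exact_mod_cast hxn.ne')]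
          simp
        conv_lhs => rw [hx_eq]
        rw [map_smul, inner_smul_left, inner_smul_right, ← mul_assoc, Complex.conj_ofReal]
        have h8 : ((‖x‖ : ℂ)) * (‖x‖ : ℂ) = ((‖x‖ ^ 2 : ℝ) : ℂ) := by
          push_cast; ring
        rw [h8, show ((‖x‖ ^ 2 : ℝ) : ℂ) = RCLike.ofReal (‖x‖ ^ 2) from rfl,
          RCLike.re_ofReal_mul]
      have h9 := hkey ψ hψ1
      rw [hscale]
      nlinarith [sq_nonneg ‖x‖]
  have hrw : (1 - a) / (↑m * (1 + a)) = 1 - c := by rw [hc]; ring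
  rw [ge_iff_le, hrw]
  linarith
end

section
/- Let Q be an orthogonal projection and Ω a Hermitian operator with Q ≤ Ω ≤ 1 and ΩQ = Q on a finite-dimensional complex Hilbert space. Set β = ‖(1−Q)Ω(1−Q)‖ and ν = 1 − β. Then for every density operator σ with tr(Qσ) ≤ 1 − ε, one has tr(Ωσ) ≤ 1 − νε. -/
open scoped InnerProductSpace

noncomputable def trOp {n : ℕ} (A : Op n) : ℂ :=
  LinearMap.trace ℂ (EuclideanSpace ℂ (Fin n)) A.toLinearMap

lemma trOp_sub {n : ℕ} (A B : Op n) : trOp (A - B) = trOp A - trOp B := by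
  rw [trOp, trOp, trOp, ContinuousLinearMap.coe_sub, map_sub]

lemma trOp_add {n : ℕ} (A B : Op n) : trOp (A + B) = trOp A + trOp B := by
  rw [trOp, trOp, trOp, ContinuousLinearMap.coe_add, map_add]

lemma trOp_smul {n : ℕ} (c : ℂ) (A : Op n) : trOp (c • A) = c * trOp A := by
  rw [trOp, trOp, ContinuousLinearMap.coe_smul, map_smul, smul_eq_mul]

lemma trOp_basis {n : ℕ} (b : OrthonormalBasis (Fin n) ℂ (EuclideanSpace ℂ (Fin n)))
    (A : Op n) : trOp A = ∑ i, ⟪b i, A (b i)⟫_ℂ := by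
  rw [trOp, LinearMap.trace_eq_matrix_trace ℂ b.toBasis, Matrix.trace]
  congr 1
  ext i
  rw [Matrix.diag, LinearMap.toMatrix_apply, b.coe_toBasis, b.coe_toBasis_repr_apply,
    b.repr_apply_apply]
  rfl

lemma trOp_nonneg {n : ℕ} {P σ : Op n} (hP : P.IsPositive) (hσ : σ.IsPositive) :
    0 ≤ (trOp (P * σ)).re := by
  have hσs : σ.toLinearMap.IsSymmetric :=
    ContinuousLinearMap.isSelfAdjoint_iff_isSymmetric.mp hσ.isSelfAdjoint
  have hn : Module.finrank ℂ (EuclideanSpace ℂ (Fin n)) = n := finrank_euclideanSpace_fin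
  set b := hσs.eigenvectorBasis hn
  rw [trOp_basis b, Complex.re_sum]
  apply Finset.sum_nonneg
  intro i _
  have hev : σ (b i) = (hσs.eigenvalues hn i : ℂ) • b i := hσs.apply_eigenvectorBasis hn i
  have hμ : 0 ≤ hσs.eigenvalues hn i := by
    have h0 := hσ.2 (b i)
    rw [ContinuousLinearMap.reApplyInnerSelf, RCLike.re_to_complex] at h0
    have h1 : (⟪σ (b i), b i⟫_ℂ).re = hσs.eigenvalues hn i := by
      rw [hev, inner_smul_left]
      simp [inner_self_eq_norm_sq_to_K, b.orthonormal.1 i]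
    linarith
  have h2 : ⟪b i, (P * σ) (b i)⟫_ℂ = (hσs.eigenvalues hn i : ℂ) * ⟪b i, P (b i)⟫_ℂ := by
    rw [ContinuousLinearMap.mul_apply, hev, map_smul, inner_smul_right]
  rw [h2, Complex.re_ofReal_mul]
  exact mul_nonneg hμ (by have h := Complex.le_def.mp (hP.inner_nonneg_right (b i)); simpa using h.1)

lemma trOp_mono {n : ℕ} {A B σ : Op n} (h : A ≤ B) (hσ : σ.IsPositive) :
    (trOp (A * σ)).re ≤ (trOp (B * σ)).re := by
  have h' : (B - A).IsPositive := (ContinuousLinearMap.le_def A B).mp h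
  have h0 := trOp_nonneg h' hσ
  rw [sub_mul, trOp_sub, Complex.sub_re] at h0
  linarith

set_option maxHeartbeats 1000000 in
theorem stmt_8 {n : ℕ} (Q Ω : Op n)
    (hQsa : IsSelfAdjoint Q) (hQ2 : Q * Q = Q)
    (hΩsa : IsSelfAdjoint Ω)
    (hQleΩ : (Ω - Q).IsPositive) (hΩle1 : (1 - Ω).IsPositive)
    (hΩQ : Ω * Q = Q)
    (β ν : ℝ) (hβ : β = ‖(1 - Q) * Ω * (1 - Q)‖) (hν : ν = 1 - β)
    (ε : ℝ) (hε0 : 0 < ε) (hε1 : ε < 1) :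
    ∀ σ : Op n, σ.IsPositive → trOp σ = 1 →
      (trOp (Q * σ)).re ≤ 1 - ε → (trOp (Ω * σ)).re ≤ 1 - ν * ε := by
  intro σ hσ htr htQ
  set R : Op n := (1 - Q) * Ω * (1 - Q) with hR
  have hQΩ : Q * Ω = Q := by
    have h1 := congrArg star hΩQ
    rwa [star_mul, hQsa.star_eq, hΩsa.star_eq] at h1
  have h1Q : (1 - Q) * (1 - Q) = 1 - Q := by
    simp only [mul_sub, sub_mul, mul_one, one_mul, hQ2, hΩQ, hQΩ]
    abel
  have hRQ : R = Ω - Q := by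
    rw [hR]
    simp only [mul_sub, sub_mul, mul_one, one_mul, hQ2, hΩQ, hQΩ]
    abel
  have hdecomp : Ω = Q + R := by rw [hRQ]; abel
  have hQpos : Q.IsPositive := by
    have h := (ContinuousLinearMap.isPositive_one
      (E := EuclideanSpace ℂ (Fin n))).conj_adjoint Q
    have hadj : ContinuousLinearMap.adjoint Q = Q := by
      rw [← ContinuousLinearMap.star_eq_adjoint, hQsa.star_eq]
    rw [hadj] at h
    have e : Q.comp ((1 : Op n).comp Q) = Q := by
      change Q * (1 * Q) = Q
      rw [one_mul, hQ2]
    rwa [e] at h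
  have hΩpos : Ω.IsPositive := by
    have h := hQpos.add hQleΩ
    simpa using h
  have h1Qadj : ContinuousLinearMap.adjoint (1 - Q : Op n) = (1 - Q : Op n) := by
    rw [map_sub]
    have h1 : ContinuousLinearMap.adjoint (1 : Op n) = 1 := by
      have := ContinuousLinearMap.adjoint_id (𝕜 := ℂ) (E := EuclideanSpace ℂ (Fin n))
      simpa [ContinuousLinearMap.one_def] using this
    have h2 : ContinuousLinearMap.adjoint Q = Q := by
      rw [← ContinuousLinearMap.star_eq_adjoint, hQsa.star_eq]
    rw [h1, h2]
  have hRpos : R.IsPositive := by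
    have h := hΩpos.conj_adjoint (1 - Q : Op n)
    rw [h1Qadj] at h
    have e : (1 - Q : Op n).comp (Ω.comp (1 - Q)) = R := by
      change (1 - Q) * (Ω * (1 - Q)) = R
      rw [← mul_assoc, hR]
    rwa [e] at h
  have hRle1 : R ≤ (1 : Op n) := by
    rw [ContinuousLinearMap.le_def]
    have h2 : ((1 - Q) * (1 - Ω) * (1 - Q) : Op n).IsPositive := by
      have h := hΩle1.conj_adjoint (1 - Q : Op n)
      rw [h1Qadj] at h
      have e : (1 - Q : Op n).comp ((1 - Ω).comp (1 - Q)) = (1 - Q) * (1 - Ω) * (1 - Q) := by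
        change (1 - Q) * ((1 - Ω) * (1 - Q)) = _
        rw [← mul_assoc]
      rwa [e] at h
    have h3 : ((1 - Q) * (1 - Ω) * (1 - Q) : Op n) = (1 - Q) - R := by
      rw [hR]
      simp only [mul_sub, sub_mul, mul_one, one_mul, hQ2, hΩQ, hQΩ]
      abel
    have h4 : (1 : Op n) - R = Q + ((1 - Q) * (1 - Ω) * (1 - Q)) := by
      rw [h3]; abel
    rw [h4]
    exact hQpos.add h2
  have hR0 : (0 : Op n) ≤ R := (ContinuousLinearMap.nonneg_iff_isPositive R).mpr hRpos
  have hβR : β = ‖R‖ := hβ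
  have hβ1 : β ≤ 1 := by
    rw [hβR]
    exact (CStarAlgebra.norm_le_one_iff_of_nonneg R hR0).mpr hRle1
  have hβ0 : 0 ≤ β := hβR ▸ norm_nonneg _
  have halg : algebraMap ℝ (Op n) β = (β : ℂ) • (1 : Op n) := by
    rw [IsScalarTower.algebraMap_apply ℝ ℂ (Op n), Algebra.algebraMap_eq_smul_one,
      Complex.coe_algebraMap]
  have hRleB : R ≤ (β : ℂ) • (1 - Q : Op n) := by
    have h1 : R ≤ algebraMap ℝ (Op n) β := by
      rw [hβR]
      exact IsSelfAdjoint.le_algebraMap_norm_self hRpos.isSelfAdjoint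
    have h2 := star_left_conjugate_le_conjugate h1 (1 - Q : Op n)
    have hstar : star (1 - Q : Op n) = 1 - Q := by
      rw [ContinuousLinearMap.star_eq_adjoint, h1Qadj]
    rw [hstar] at h2
    have hL : (1 - Q : Op n) * R * (1 - Q) = R := by
      rw [hR]
      simp only [mul_sub, sub_mul, mul_one, one_mul, hQ2, hΩQ, hQΩ]
      abel
    have hRt : (1 - Q : Op n) * algebraMap ℝ (Op n) β * (1 - Q) = (β : ℂ) • (1 - Q : Op n) := by
      rw [halg, mul_smul_comm, mul_one, smul_mul_assoc, h1Q]
    rwa [hL, hRt] at h2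
  have htsplit : (trOp (Ω * σ)).re = (trOp (Q * σ)).re + (trOp (R * σ)).re := by
    rw [hdecomp, add_mul, trOp_add, Complex.add_re]
  have htR : (trOp (R * σ)).re ≤ β * (1 - (trOp (Q * σ)).re) := by
    have h := trOp_mono hRleB hσ
    have hsmul : trOp (((β : ℂ) • (1 - Q : Op n)) * σ) = (β : ℂ) * trOp ((1 - Q) * σ) := by
      rw [smul_mul_assoc, trOp_smul]
    have h1mQ : trOp ((1 - Q : Op n) * σ) = 1 - trOp (Q * σ) := by
      rw [sub_mul, one_mul, trOp_sub, htr]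
    rw [hsmul, h1mQ, Complex.re_ofReal_mul, Complex.sub_re] at h
    simpa using h
  have htQ0 : 0 ≤ (trOp (Q * σ)).re := trOp_nonneg hQpos hσ
  rw [htsplit]
  nlinarith [htR, htQ, hν, hβ1, hβ0, htQ0]
end

section
/- Let μ be a probability measure on the unit sphere S² and for each t ≥ 0 define the frame potential F_t(μ) = ∬ (r·s)^t dμ(r) dμ(s). Then for every even positive integer t, F_t(μ) ≥ 1/(t+1). -/
open MeasureTheory Set Metric Real Pointwise

noncomputable section FP17

abbrev E3 : Type := EuclideanSpace ℝ (Fin 3)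
abbrev S2 : Type := Metric.sphere (0 : E3) 1

def nu3 : Measure S2 := (volume : Measure E3).toSphere

def sig3 : Measure S2 := (nu3 univ)⁻¹ • nu3

def J3 (n : ℕ) : ℝ := ∫ x in Ioi (0:ℝ), x ^ n * Real.exp (-x^2)

lemma J3_eq (n : ℕ) : J3 n = (1/2) * Real.Gamma ((n+1)/2) := by
  have h : ∀ x ∈ Ioi (0:ℝ), x ^ n * Real.exp (-x^2) = x ^ (n:ℝ) * Real.exp (-x ^ (2:ℝ)) := by
    intro x hx
    rw [Real.rpow_natCast, show ((2:ℝ)) = ((2:ℕ):ℝ) by norm_num, Real.rpow_natCast]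
  rw [J3, setIntegral_congr_fun measurableSet_Ioi h,
    integral_rpow_mul_exp_neg_rpow two_pos
      (by exact neg_one_lt_zero.trans_le (Nat.cast_nonneg n))]

lemma J3_pos (n : ℕ) : 0 < J3 n := by
  rw [J3_eq]
  have : (0:ℝ) < ((n:ℝ)+1)/2 := by positivity
  have := Real.Gamma_pos_of_pos this
  linarith

lemma J3_rec (n : ℕ) : J3 (n+2) = (((n:ℝ)+1)/2) * J3 n := by
  rw [J3_eq, J3_eq]
  push_cast
  rw [show ((n:ℝ)+2+1)/2 = ((n:ℝ)+1)/2 + 1 by ring,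
    Real.Gamma_add_one (by positivity)]
  ring

lemma integrable_pow_exp (n : ℕ) (hn : Even n) :
    Integrable (fun x : ℝ => x ^ n * Real.exp (-x^2)) := by
  have hf : IntegrableOn (fun x : ℝ => x ^ n * Real.exp (-x^2)) (Ioi 0) := by
    have h := integrableOn_rpow_mul_exp_neg_mul_sq one_pos
      (s := (n:ℝ)) (neg_one_lt_zero.trans_le (Nat.cast_nonneg n))
    refine h.congr_fun (fun x hx => ?_) measurableSet_Ioi
    simp only [Real.rpow_natCast, neg_one_mul]
  have heq : (fun x : ℝ => x ^ n * Real.exp (-x^2))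
      = fun x => |x| ^ n * Real.exp (-|x|^2) := by
    funext x; rw [hn.pow_abs, sq_abs]
  have int_Iic : IntegrableOn (fun x : ℝ => x ^ n * Real.exp (-x^2)) (Iic 0) := by
    rw [heq] at hf ⊢
    rw [← Measure.map_neg_eq_self (volume : Measure ℝ)]
    have m : MeasurableEmbedding fun x : ℝ => -x :=
      (Homeomorph.neg ℝ).measurableEmbedding
    rw [m.integrableOn_map_iff]
    simp_rw [Function.comp_def, abs_neg, neg_preimage, neg_Iic, neg_zero]
    exact Iff.mpr integrableOn_Ici_iff_integrableOn_Ioi hf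
  rw [← integrableOn_univ, ← Iic_union_Ioi (a := (0:ℝ))]
  exact int_Iic.union hf

lemma G3_eq (n : ℕ) (hn : Even n) :
    ∫ x : ℝ, x ^ n * Real.exp (-x^2) = 2 * J3 n := by
  rw [J3, ← integral_comp_abs (f := fun u : ℝ => u ^ n * Real.exp (-u^2))]
  simp only [hn.pow_abs, sq_abs]

lemma polar_moment (j : Fin 3) (t : ℕ) :
    ∫ x : E3, (x j) ^ t * Real.exp (-‖x‖^2) =
      (∫ ω : S2, ((ω : E3) j) ^ t ∂nu3) * J3 (t+2) := by
  have h1 : ∫ x : E3, (x j) ^ t * Real.exp (-‖x‖^2)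
      = ∫ x : ({(0:E3)}ᶜ : Set E3), ((x : E3) j) ^ t * Real.exp (-‖(x : E3)‖^2)
          ∂((volume : Measure E3).comap Subtype.val) := by
    rw [integral_subtype_comap (measurableSet_singleton _).compl
      (fun x : E3 => (x j) ^ t * Real.exp (-‖x‖^2)), restrict_compl_singleton]
  rw [h1]
  have hdim : Module.finrank ℝ E3 - 1 = 2 := by simp [finrank_euclideanSpace_fin]
  have h2 := (volume : Measure E3).measurePreserving_homeomorphUnitSphereProd
  rw [hdim] at h2
  set g : S2 × Ioi (0:ℝ) → ℝ :=
    fun p => ((p.1 : E3) j)^t * ((p.2 : ℝ)^t * Real.exp (-(p.2 : ℝ)^2)) with hgdef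
  have hcomp : (fun x : ({(0:E3)}ᶜ : Set E3) =>
        ((x : E3) j) ^ t * Real.exp (-‖(x : E3)‖^2))
      = fun x => g (homeomorphUnitSphereProd E3 x) := by
    funext x
    have hx0 : (x : E3) ≠ 0 := x.2
    have hn : ‖(x : E3)‖ ≠ 0 := norm_ne_zero_iff.mpr hx0
    simp only [hgdef, homeomorphUnitSphereProd_apply_fst_coe,
      homeomorphUnitSphereProd_apply_snd_coe, PiLp.smul_apply, smul_eq_mul]
    rw [mul_pow]
    field_simp
    rw [one_div, mul_assoc, ← mul_pow, inv_mul_cancel₀ hn, one_pow, mul_one]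
  rw [hcomp, h2.integral_comp (Homeomorph.measurableEmbedding _) g]
  rw [hgdef, integral_prod_mul (f := fun ω : S2 => ((ω : E3) j)^t)
    (g := fun ρ : Ioi (0:ℝ) => (ρ : ℝ)^t * Real.exp (-(ρ : ℝ)^2))]
  congr 1
  simp only [Measure.volumeIoiPow, ENNReal.ofReal]
  rw [integral_withDensity_eq_integral_smul
    ((measurable_subtype_coe.pow_const _).real_toNNReal)]
  rw [integral_subtype_comap measurableSet_Ioi
    (fun x : ℝ => (x^2).toNNReal • (x^t * Real.exp (-x^2)))]
  rw [J3]
  refine setIntegral_congr_fun measurableSet_Ioi fun x hx => ?_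
  rw [NNReal.smul_def, Real.coe_toNNReal _ (by positivity), smul_eq_mul, pow_add]
  ring

lemma lhs_fubini (j : Fin 3) (t : ℕ) (ht : Even t) :
    ∫ x : E3, (x j) ^ t * Real.exp (-‖x‖^2) = (2 * J3 t) * (2 * J3 0)^2 := by
  have hmp := (EuclideanSpace.volume_preserving_symm_measurableEquiv_toLp (Fin 3)).symm
  rw [← hmp.integral_comp (MeasurableEquiv.measurableEmbedding _)
    (fun x : E3 => (x j) ^ t * Real.exp (-‖x‖^2))]
  have hpt : ∀ y : Fin 3 → ℝ,
      ((((MeasurableEquiv.toLp 2 (Fin 3 → ℝ)) y : E3) j) ^ t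
        * Real.exp (-‖((MeasurableEquiv.toLp 2 (Fin 3 → ℝ)) y : E3)‖^2))
      = ∏ i, ((if i = j then (y i) ^ t else 1) * Real.exp (-(y i)^2)) := by
    intro y
    have hnorm : ‖((MeasurableEquiv.toLp 2 (Fin 3 → ℝ)) y : E3)‖^2
        = ∑ i, (y i)^2 := by
      simp only [MeasurableEquiv.coe_toLp, EuclideanSpace.norm_eq, PiLp.toLp_apply,
        Real.norm_eq_abs, sq_abs]
      rw [sq_sqrt (Finset.sum_nonneg fun i _ => by positivity)]
    have happ : (((MeasurableEquiv.toLp 2 (Fin 3 → ℝ)) y : E3) j) = y j := by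
      rfl
    rw [happ, hnorm, Finset.prod_mul_distrib, ← Real.exp_sum]
    simp [Finset.prod_ite_eq', Finset.sum_neg_distrib]
  calc ∫ y : Fin 3 → ℝ,
        ((((MeasurableEquiv.toLp 2 (Fin 3 → ℝ)) y : E3) j) ^ t
          * Real.exp (-‖((MeasurableEquiv.toLp 2 (Fin 3 → ℝ)) y : E3)‖^2))
      = ∫ y : Fin 3 → ℝ, ∏ i, ((if i = j then (y i) ^ t else 1) * Real.exp (-(y i)^2)) := by
        rw [show (fun y : Fin 3 → ℝ =>
            ((((MeasurableEquiv.toLp 2 (Fin 3 → ℝ)) y : E3) j) ^ t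
              * Real.exp (-‖((MeasurableEquiv.toLp 2 (Fin 3 → ℝ)) y : E3)‖^2)))
          = fun y : Fin 3 → ℝ =>
            ∏ i, ((if i = j then (y i) ^ t else 1) * Real.exp (-(y i)^2))
          from funext hpt]
    _ = ∏ i, ∫ u : ℝ, (if i = j then u ^ t else 1) * Real.exp (-u^2) :=
        MeasureTheory.integral_fintype_prod_eq_prod
          (fun i u => (if i = j then u ^ t else 1) * Real.exp (-u^2))
    _ = (2 * J3 t) * (2 * J3 0)^2 := by
        have hval : ∀ i : Fin 3, (∫ u : ℝ, (if i = j then u ^ t else 1) * Real.exp (-u^2))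
            = if i = j then 2 * J3 t else 2 * J3 0 := by
          intro i
          by_cases h : i = j
          · simp only [h, if_true]
            exact G3_eq t ht
          · simp only [h, if_false, one_mul]
            simpa using G3_eq 0 Even.zero
        simp_rw [hval]
        rw [Fin.prod_univ_three]
        fin_cases j <;> simp <;> ring

lemma nu3_moment (j : Fin 3) (t : ℕ) (ht : Even t) :
    ∫ ω : S2, ((ω : E3) j) ^ t ∂nu3 = (2 * J3 t) * (2 * J3 0)^2 / J3 (t+2) := by
  have h := polar_moment j t
  rw [lhs_fubini j t ht] at h
  field_simp [(J3_pos (t+2)).ne'] at h ⊢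
  linarith

instance : IsFiniteMeasure nu3 :=
  inferInstanceAs (IsFiniteMeasure (volume : Measure E3).toSphere)

lemma nu3_univ_ne_zero : nu3 univ ≠ 0 := by
  show (volume : Measure E3).toSphere univ ≠ 0
  rw [Measure.toSphere_apply_univ]
  refine mul_ne_zero ?_ (measure_ball_pos volume (0:E3) one_pos).ne'
  simp [finrank_euclideanSpace_fin]

instance : IsProbabilityMeasure sig3 := by
  constructor
  rw [sig3, Measure.smul_apply, smul_eq_mul]
  exact ENNReal.inv_mul_cancel nu3_univ_ne_zero (measure_ne_top _ _)

lemma sig3_moment (j : Fin 3) (t : ℕ) (ht : Even t) :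
    ∫ ω : S2, ((ω : E3) j) ^ t ∂sig3 = 1 / ((t : ℝ) + 1) := by
  have h0 : (nu3 univ).toReal = (2 * J3 0) * (2 * J3 0)^2 / J3 2 := by
    have h := nu3_moment j 0 Even.zero
    simpa [integral_const, measureReal_def] using h
  have h2 : J3 2 = 1/2 * J3 0 := by simpa using J3_rec 0
  have hrec : J3 (t+2) = (((t:ℝ)+1)/2) * J3 t := J3_rec t
  rw [sig3, integral_smul_measure, nu3_moment j t ht, ENNReal.toReal_inv, h0,
    smul_eq_mul, h2, hrec]
  have h1 := (J3_pos t).ne'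
  have h3 := (J3_pos 0).ne'
  have h4 : ((t:ℝ)+1) ≠ 0 := by positivity
  field_simp

def sphMap (g : E3 ≃ₗᵢ[ℝ] E3) : S2 → S2 := fun s =>
  ⟨g s, mem_sphere_zero_iff_norm.mpr
    (by rw [g.norm_map]; exact mem_sphere_zero_iff_norm.mp s.2)⟩

lemma sphMap_continuous (g : E3 ≃ₗᵢ[ℝ] E3) : Continuous (sphMap g) :=
  (g.continuous.comp continuous_subtype_val).subtype_mk _

lemma nu3_map (g : E3 ≃ₗᵢ[ℝ] E3) : nu3.map (sphMap g) = nu3 := by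
  have hgS : Continuous (sphMap g) := sphMap_continuous g
  ext s hs
  rw [Measure.map_apply hgS.measurable hs]
  show (volume : Measure E3).toSphere _ = (volume : Measure E3).toSphere s
  rw [Measure.toSphere_apply' _ hs, Measure.toSphere_apply' _ (hgS.measurable hs)]
  congr 1
  have hset : (Subtype.val '' (sphMap g ⁻¹' s)) = ⇑g.symm '' (Subtype.val '' s) := by
    ext x
    constructor
    · rintro ⟨a, ha, rfl⟩
      exact ⟨g a, ⟨sphMap g a, ha, rfl⟩, by simp⟩
    · rintro ⟨y, ⟨u, hu, rfl⟩, rfl⟩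
      have hmem : g.symm ↑u ∈ sphere (0:E3) 1 := mem_sphere_zero_iff_norm.mpr
        (by rw [g.symm.norm_map]; exact mem_sphere_zero_iff_norm.mp u.2)
      refine ⟨⟨g.symm ↑u, hmem⟩, ?_, rfl⟩
      show sphMap g ⟨g.symm ↑u, hmem⟩ ∈ s
      have heq : sphMap g ⟨g.symm ↑u, hmem⟩ = u := by
        apply Subtype.ext
        show g (g.symm ↑u) = ↑u
        simp
      rw [heq]
      exact hu
  rw [hset]
  have hsmul : Ioo (0:ℝ) 1 • (⇑g.symm '' (Subtype.val '' s))
      = ⇑g.symm '' (Ioo (0:ℝ) 1 • (Subtype.val '' s)) := by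
    ext z
    simp only [Set.mem_smul, Set.mem_image]
    constructor
    · rintro ⟨c, hc, y, ⟨w, hw, rfl⟩, rfl⟩
      exact ⟨c • w, ⟨c, hc, w, hw, rfl⟩, by simp⟩
    · rintro ⟨y, ⟨c, hc, w, hw, rfl⟩, rfl⟩
      exact ⟨c, hc, g.symm w, ⟨w, hw, rfl⟩, by simp⟩
  rw [hsmul]
  set X := Ioo (0:ℝ) 1 • (Subtype.val '' s) with hX
  have him : ⇑g.symm '' X = ⇑g ⁻¹' X := by
    ext x
    constructor
    · rintro ⟨y, hy, rfl⟩; simpa using hy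
    · intro hx; exact ⟨g x, hx, by simp⟩
  rw [him]
  have h1 : (volume : Measure E3).map (g.toHomeomorph.toMeasurableEquiv) = volume :=
    (g.measurePreserving).map_eq
  calc (volume : Measure E3) (⇑g ⁻¹' X)
      = (volume : Measure E3) ((g.toHomeomorph.toMeasurableEquiv) ⁻¹' X) := rfl
    _ = ((volume : Measure E3).map (g.toHomeomorph.toMeasurableEquiv)) X :=
        (MeasurableEquiv.map_apply _ _).symm
    _ = (volume : Measure E3) X := by rw [h1]

lemma sig3_map (g : E3 ≃ₗᵢ[ℝ] E3) : sig3.map (sphMap g) = sig3 := by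
  rw [sig3, Measure.map_smul, nu3_map g]

lemma sig3_inner (r : S2) (t : ℕ) (ht : Even t) :
    ∫ s : S2, (inner ℝ (r : E3) (s : E3) : ℝ) ^ t ∂sig3 = 1 / ((t : ℝ) + 1) := by
  have hr : ‖(r : E3)‖ = 1 := mem_sphere_zero_iff_norm.mp r.2
  have horth : Orthonormal ℝ (({0} : Set (Fin 3)).restrict fun _ => (r : E3)) := by
    refine ⟨fun i => hr, ?_⟩
    intro i j hij
    exact absurd (Subtype.ext (i.2.trans j.2.symm)) hij
  obtain ⟨b, hb⟩ := horth.exists_orthonormalBasis_extension_of_card_eq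
    (by simp [finrank_euclideanSpace_fin])
  set g : E3 ≃ₗᵢ[ℝ] E3 := b.repr.symm with hgdef
  have hg : g (EuclideanSpace.single 0 1) = (r : E3) := by
    have h1 : b.repr (b 0) = EuclideanSpace.single (0 : Fin 3) (1:ℝ) := b.repr_self 0
    have h2 : b 0 = (r : E3) := hb 0 rfl
    rw [hgdef, ← h1, LinearIsometryEquiv.symm_apply_apply, h2]
  have hcont : Continuous fun s : S2 => (inner ℝ (r : E3) (s : E3) : ℝ) ^ t :=
    (Continuous.inner continuous_const continuous_subtype_val).pow t
  have hinv : ∫ s : S2, (inner ℝ (r : E3) (s : E3) : ℝ) ^ t ∂sig3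
      = ∫ s : S2, (inner ℝ (r : E3) ((sphMap g s : S2) : E3) : ℝ) ^ t ∂sig3 := by
    conv_lhs => rw [← sig3_map g]
    rw [integral_map (sphMap_continuous g).measurable.aemeasurable
      hcont.aestronglyMeasurable]
  have hpt : ∀ s : S2, (inner ℝ (r : E3) ((sphMap g s : S2) : E3) : ℝ)
      = (s : E3) 0 := by
    intro s
    show (inner ℝ (r : E3) (g (s : E3)) : ℝ) = (s : E3) 0
    rw [← hg, g.inner_map_map]
    simp [EuclideanSpace.inner_single_left]
  rw [hinv]
  simp_rw [hpt]
  exact sig3_moment 0 t ht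

lemma cont_prod (t : ℕ) (p : Fin t → Fin 3) :
    Continuous fun r : S2 => ∏ k, (r : E3) (p k) := by
  apply continuous_finset_prod
  intro k _
  exact (continuous_apply (p k)).comp ((PiLp.continuous_ofLp _ _).comp continuous_subtype_val)

lemma integrable_prod (m : Measure S2) [IsFiniteMeasure m] (t : ℕ) (p : Fin t → Fin 3) :
    Integrable (fun r : S2 => ∏ k, (r : E3) (p k)) m :=
  (cont_prod t p).integrable_of_hasCompactSupport (HasCompactSupport.of_compactSpace _)

lemma inner_pow_expand (t : ℕ) (r s : S2) :
    (inner ℝ (r : E3) (s : E3) : ℝ) ^ t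
      = ∑ p : Fin t → Fin 3, (∏ k, (r : E3) (p k)) * ∏ k, (s : E3) (p k) := by
  have h : (inner ℝ (r : E3) (s : E3) : ℝ) = ∑ i, (r : E3) i * (s : E3) i := by
    simp [PiLp.inner_apply, RCLike.inner_apply, conj_trivial, mul_comm]
  rw [h, Fintype.sum_pow]
  exact Finset.sum_congr rfl fun p _ => Finset.prod_mul_distrib

lemma expand3 (m₁ m₂ : Measure S2) [IsFiniteMeasure m₁] [IsFiniteMeasure m₂] (t : ℕ) :
    ∫ r, (∫ s, (inner ℝ (r : E3) (s : E3) : ℝ) ^ t ∂m₂) ∂m₁ =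
      ∑ p : Fin t → Fin 3,
        (∫ r, ∏ k, (r : E3) (p k) ∂m₁) * (∫ s, ∏ k, (s : E3) (p k) ∂m₂) := by
  have hin : ∀ r : S2, (∫ s, (inner ℝ (r : E3) (s : E3) : ℝ) ^ t ∂m₂)
      = ∑ p : Fin t → Fin 3,
          (∏ k, (r : E3) (p k)) * ∫ s, ∏ k, (s : E3) (p k) ∂m₂ := by
    intro r
    rw [show (fun s : S2 => (inner ℝ (r : E3) (s : E3) : ℝ) ^ t)
        = fun s : S2 => ∑ p : Fin t → Fin 3, (∏ k, (r : E3) (p k)) * ∏ k, (s : E3) (p k)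
      from funext fun s => inner_pow_expand t r s]
    rw [integral_finset_sum _ (fun p _ => (integrable_prod m₂ t p).const_mul _)]
    exact Finset.sum_congr rfl fun p _ => integral_const_mul _ _
  rw [show (fun r : S2 => ∫ s, (inner ℝ (r : E3) (s : E3) : ℝ) ^ t ∂m₂)
      = fun r : S2 => ∑ p : Fin t → Fin 3,
          (∏ k, (r : E3) (p k)) * ∫ s, ∏ k, (s : E3) (p k) ∂m₂ from funext hin]
  rw [integral_finset_sum _ (fun p _ => (integrable_prod m₁ t p).mul_const _)]
  exact Finset.sum_congr rfl fun p _ => integral_mul_const _ _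

end FP17


theorem stmt_17
    (μ : Measure (Metric.sphere (0 : EuclideanSpace ℝ (Fin 3)) 1))
    [IsProbabilityMeasure μ] (t : ℕ) (ht : Even t) (ht0 : 0 < t) :
    (1 : ℝ) / (t + 1) ≤
      ∫ r, ∫ s,
        (inner ℝ (r : EuclideanSpace ℝ (Fin 3)) (s : EuclideanSpace ℝ (Fin 3)) : ℝ) ^ t
        ∂μ ∂μ := by
  classical
  set A : (Fin t → Fin 3) → ℝ := fun p => ∫ r, ∏ k, (r : E3) (p k) ∂μ with hA
  set B : (Fin t → Fin 3) → ℝ := fun p => ∫ s, ∏ k, (s : E3) (p k) ∂sig3 with hB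
  have hMM : (∫ r, ∫ s, (inner ℝ (r : E3) (s : E3) : ℝ) ^ t ∂μ ∂μ) = ∑ p, A p * A p :=
    expand3 μ μ t
  have hMU : (∑ p, A p * B p) = 1 / ((t : ℝ) + 1) := by
    rw [← expand3 μ sig3 t]
    rw [integral_congr_ae (Filter.Eventually.of_forall fun r => sig3_inner r t ht)]
    simp
  have hUU : (∑ p, B p * B p) = 1 / ((t : ℝ) + 1) := by
    rw [← expand3 sig3 sig3 t]
    rw [integral_congr_ae (Filter.Eventually.of_forall fun r => sig3_inner r t ht)]
    simp
  have h0 : (0:ℝ) ≤ ∑ p, (A p - B p)^2 :=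
    Finset.sum_nonneg fun p _ => sq_nonneg _
  have hexp : (∑ p, (A p - B p)^2) =
      (∑ p, A p * A p) - 2 * (∑ p, A p * B p) + ∑ p, B p * B p := by
    rw [Finset.sum_congr rfl (fun p _ => by ring :
      ∀ p ∈ Finset.univ, (A p - B p)^2 = A p * A p - 2 * (A p * B p) + B p * B p)]
    rw [Finset.sum_add_distrib, Finset.sum_sub_distrib, ← Finset.mul_sum]
  rw [hMM]
  rw [hMU, hUU] at hexp
  push_cast
  linarith
end
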